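/- Suppose each per-step success probability obeys scaling-law growth P_i(N) = exp(−c_i N^{−α_i}) with c_i, α_i > 0, not all α_i equal. Then F(log N) = log(−log Π_i P_i(N)) is a strictly convex function of log N; i.e., the multi-step success rate follows sub-scaling-law growth. -/

import Mathlib

open Real

private lemma cs_strict {n : ℕ} (a b : Fin n → ℝ) (ha : ∀ i, 0 < a i)
    (hne : ∃ i j, b i ≠ b j) :
    (∑ i, a i * b i) ^ 2 < (∑ i, a i * b i ^ 2) * (∑ i, a i) := by
  have e1 : (∑ i, a i * b i ^ 2) * (∑ j, a j)
      = ∑ i, ∑ j, (a i * b i ^ 2) * a j := Finset.sum_mul_sum _ _ _ _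
  have e2 : (∑ i, a i) * (∑ j, a j * b j ^ 2)
      = ∑ i, ∑ j, a i * (a j * b j ^ 2) := Finset.sum_mul_sum _ _ _ _
  have e3 : (∑ i, a i * b i) * (∑ j, a j * b j)
      = ∑ i, ∑ j, (a i * b i) * (a j * b j) := Finset.sum_mul_sum _ _ _ _
  have key : ∑ i, ∑ j, a i * a j * (b i - b j) ^ 2
      = (∑ i, a i * b i ^ 2) * (∑ j, a j) + (∑ i, a i) * (∑ j, a j * b j ^ 2)
        - 2 * ((∑ i, a i * b i) * (∑ j, a j * b j)) := by
    rw [e1, e2, e3, Finset.mul_sum, ← Finset.sum_add_distrib, ← Finset.sum_sub_distrib]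
    refine Finset.sum_congr rfl fun i _ => ?_
    rw [Finset.mul_sum, ← Finset.sum_add_distrib, ← Finset.sum_sub_distrib]
    exact Finset.sum_congr rfl fun j _ => by ring
  have hpos : 0 < ∑ i, ∑ j, a i * a j * (b i - b j) ^ 2 := by
    obtain ⟨i0, j0, hij⟩ := hne
    refine Finset.sum_pos' (fun i _ => Finset.sum_nonneg fun j _ => mul_nonneg (mul_nonneg (ha i).le (ha j).le) (sq_nonneg _))
      ⟨i0, Finset.mem_univ _, ?_⟩
    refine Finset.sum_pos' (fun j _ => mul_nonneg (mul_nonneg (ha i0).le (ha j).le) (sq_nonneg _)) ⟨j0, Finset.mem_univ _, ?_⟩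
    have : b i0 - b j0 ≠ 0 := sub_ne_zero.mpr hij
    have h2 : 0 < (b i0 - b j0) ^ 2 := by positivity
    exact mul_pos (mul_pos (ha i0) (ha j0)) h2
  nlinarith [key, hpos]

theorem multi_step_strictly_convex (n : ℕ) (hn : 0 < n) (c α : Fin n → ℝ)
    (hc : ∀ i, 0 < c i) (hα : ∀ i, 0 < α i) (hne : ∃ i j, α i ≠ α j) :
    StrictConvexOn ℝ Set.univ
      (fun x : ℝ =>
        Real.log (-Real.log (∏ i, Real.exp (-(c i) * Real.exp (-(α i) * x))))) := by
  have hfun : (fun x : ℝ =>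
      Real.log (-Real.log (∏ i, Real.exp (-(c i) * Real.exp (-(α i) * x)))))
      = fun x => Real.log (∑ i, c i * Real.exp (-(α i) * x)) := by
    funext x
    rw [← Real.exp_sum, Real.log_exp]
    congr 1
    simp [neg_mul]
  rw [hfun]
  set g : ℝ → ℝ := fun x => ∑ i, c i * Real.exp (-(α i) * x) with hgdef
  set g1 : ℝ → ℝ := fun x => ∑ i, -(c i * α i * Real.exp (-(α i) * x)) with hg1def
  set g2 : ℝ → ℝ := fun x => ∑ i, c i * α i ^ 2 * Real.exp (-(α i) * x) with hg2def
  have hgpos : ∀ x, 0 < g x := fun x =>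
    Finset.sum_pos (fun i _ => mul_pos (hc i) (Real.exp_pos _)) ⟨⟨0, hn⟩, Finset.mem_univ _⟩
  have hexp : ∀ (i : Fin n) (x : ℝ),
      HasDerivAt (fun y => Real.exp (-(α i) * y)) (Real.exp (-(α i) * x) * (-(α i) * 1)) x :=
    fun i x => ((hasDerivAt_id x).const_mul (-(α i))).exp
  have hg' : ∀ x, HasDerivAt g (g1 x) x := by
    intro x
    have h := HasDerivAt.fun_sum (fun i (_ : i ∈ Finset.univ) => ((hexp i x).const_mul (c i)))
    refine h.congr_deriv ?_
    exact Finset.sum_congr rfl fun i _ => by ring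
  have hg1' : ∀ x, HasDerivAt g1 (g2 x) x := by
    intro x
    have h := HasDerivAt.fun_sum (fun i (_ : i ∈ Finset.univ) =>
      (((hexp i x).const_mul (c i * α i)).neg))
    refine h.congr_deriv ?_
    exact Finset.sum_congr rfl fun i _ => by ring
  have hF' : ∀ x, HasDerivAt (fun y => Real.log (g y)) (g1 x / g x) x :=
    fun x => (hg' x).log (hgpos x).ne'
  have hderivF : deriv (fun y => Real.log (g y)) = fun x => g1 x / g x :=
    funext fun x => (hF' x).deriv
  have hF'' : ∀ x, HasDerivAt (fun y => g1 y / g y)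
      ((g2 x * g x - g1 x * g1 x) / (g x) ^ 2) x :=
    fun x => (hg1' x).div (hg' x) (hgpos x).ne'
  have hnum : ∀ x, 0 < g2 x * g x - g1 x * g1 x := by
    intro x
    set a : Fin n → ℝ := fun i => c i * Real.exp (-(α i) * x) with hadef
    have ha : ∀ i, 0 < a i := fun i => mul_pos (hc i) (Real.exp_pos _)
    have h1 : g1 x = -∑ i, a i * α i := by
      simp only [hg1def, hadef]
      rw [← Finset.sum_neg_distrib]
      exact Finset.sum_congr rfl fun i _ => by ring
    have h2 : g2 x = ∑ i, a i * α i ^ 2 := by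
      simp only [hg2def, hadef]
      exact Finset.sum_congr rfl fun i _ => by ring
    have h3 : g x = ∑ i, a i := rfl
    have := cs_strict a α ha hne
    rw [h1, h2, h3]
    nlinarith [this]
  have hcont : ContinuousOn (fun y => Real.log (g y)) Set.univ := by
    refine Continuous.continuousOn (Continuous.log ?_ fun x => (hgpos x).ne')
    exact continuous_finset_sum _ fun i _ =>
      continuous_const.mul (Real.continuous_exp.comp (continuous_const.mul continuous_id))
  refine strictConvexOn_of_deriv2_pos convex_univ hcont fun x _ => ?_
  have : deriv^[2] (fun y => Real.log (g y)) x
      = deriv (deriv (fun y => Real.log (g y))) x := by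
    rw [Function.iterate_succ_apply', Function.iterate_one]
  rw [this, hderivF, (hF'' x).deriv]
  exact div_pos (hnum x) (pow_pos (hgpos x) 2)
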